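/- Let A > 0 and let f be in the class F. Then the second partial derivatives of (x,y) ↦ E_f(x,y,A) at the point (0,1) are: ∂²_{xx} E_f(0,1,A) = 2A ∑ n² f'(A[m²+n²]) + 4A² ∑ m²n² f''(A[m²+n²]); ∂²_{yy} E_f(0,1,A) = 2A ∑ m² f'(A[m²+n²]) + A² ∑ (n²−m²)² f''(A[m²+n²]); and the mixed derivative ∂²_{xy} E_f(0,1,A) = 0, where all sums are over (m,n) ∈ ℤ²∖{(0,0)}. In particular the Hessian of E_f(·,·,A) at (0,1) is diagonal. -/

import Mathlib

open Real Filter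

noncomputable section

def ClassF (f : ℝ → ℝ) : Prop :=
  ContDiffOn ℝ 2 f (Set.Ioi 0) ∧
  ∀ k : ℕ, k ≤ 2 → ∃ η : ℝ, 1 < η ∧
    (iteratedDeriv k f) =O[atTop] fun r : ℝ => r ^ (-(η + k))

def Qf (x y A : ℝ) (p : ℤ × ℤ) : ℝ :=
  A * (((p.1 : ℝ) + x * (p.2 : ℝ)) ^ 2 / y + y * (p.2 : ℝ) ^ 2)

def Ef (f : ℝ → ℝ) (x y A : ℝ) : ℝ :=
  ∑' p : {p : ℤ × ℤ // p ≠ 0}, f (Qf x y A p.1)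

namespace HessianAux

open Set

abbrev I2 := {p : ℤ × ℤ // p ≠ 0}

/-- squared norm -/
def Nsq (p : I2) : ℝ := (p.1.1:ℝ)^2 + (p.1.2:ℝ)^2

lemma sq_int_ge_one {m : ℤ} (h : m ≠ 0) : (1:ℝ) ≤ (m:ℝ)^2 := by
  have h1 : (1:ℤ) ≤ |m| := Int.one_le_abs h
  have h2 : (1:ℝ) ≤ ((|m|:ℤ):ℝ) := by exact_mod_cast h1
  rw [Int.cast_abs] at h2
  nlinarith [abs_nonneg (m:ℝ), sq_abs (m:ℝ)]

lemma one_le_N (p : I2) : (1:ℝ) ≤ Nsq p := by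
  rcases p with ⟨⟨m,n⟩, hp⟩
  have h : m ≠ 0 ∨ n ≠ 0 := by
    by_contra h; push_neg at h; exact hp (Prod.ext h.1 h.2)
  unfold Nsq
  rcases h with h | h
  · nlinarith [sq_int_ge_one h, sq_nonneg ((n:ℤ):ℝ)]
  · nlinarith [sq_int_ge_one h, sq_nonneg ((m:ℤ):ℝ)]

lemma summable_N_rpow {η : ℝ} (hη : 1 < η) :
    Summable (fun p : I2 => Nsq p ^ (-η)) := by
  have h2 : (2:ℝ) < 2*η := by linarith
  have hs := EisensteinSeries.summable_one_div_norm_rpow h2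
  have hs2 : Summable (fun p : ℤ × ℤ => ‖(finTwoArrowEquiv ℤ).symm p‖ ^ (-(2*η))) :=
    hs.comp_injective (Equiv.injective _)
  have hs3 : Summable (fun p : I2 => ‖(finTwoArrowEquiv ℤ).symm p.1‖ ^ (-(2*η))) :=
    hs2.subtype _
  apply hs3.of_nonneg_of_le (fun p => Real.rpow_nonneg (le_trans zero_le_one (one_le_N p)) _)
  intro p
  set m := p.1.1 with hm; set n := p.1.2 with hn
  have hnorm : ‖(finTwoArrowEquiv ℤ).symm p.1‖ = max (m.natAbs : ℝ) (n.natAbs : ℝ) := by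
    rw [EisensteinSeries.norm_eq_max_natAbs]
    simp [finTwoArrowEquiv, ← hm, ← hn]
  have hpos : (0:ℝ) < max (m.natAbs : ℝ) (n.natAbs : ℝ) := by
    rcases (by by_contra hc; push_neg at hc; exact p.2 (Prod.ext hc.1 hc.2) : m ≠ 0 ∨ n ≠ 0)
      with h|h
    · exact lt_max_of_lt_left (by exact_mod_cast Int.natAbs_pos.mpr h)
    · exact lt_max_of_lt_right (by exact_mod_cast Int.natAbs_pos.mpr h)
  have hsq : (max (m.natAbs:ℝ) (n.natAbs:ℝ))^2 ≤ (m:ℝ)^2 + (n:ℝ)^2 := by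
    have h1 : ((m.natAbs:ℝ))^2 = (m:ℝ)^2 := by
      rw [Nat.cast_natAbs, Int.cast_abs, sq_abs]
    have h2 : ((n.natAbs:ℝ))^2 = (n:ℝ)^2 := by
      rw [Nat.cast_natAbs, Int.cast_abs, sq_abs]
    rcases max_cases ((m.natAbs:ℝ)) ((n.natAbs:ℝ)) with ⟨he, _⟩ | ⟨he, _⟩ <;> rw [he]
    · nlinarith [sq_nonneg (n:ℝ)]
    · nlinarith [sq_nonneg (m:ℝ)]
  rw [hnorm]
  calc ((Nsq p)) ^ (-η) ≤ ((max (m.natAbs:ℝ) (n.natAbs:ℝ))^2) ^ (-η) :=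
        Real.rpow_le_rpow_of_nonpos (by positivity) hsq (by linarith)
    _ = (max (m.natAbs:ℝ) (n.natAbs:ℝ)) ^ (-(2*η)) := by
        rw [← Real.rpow_natCast (max _ _) 2, ← Real.rpow_mul hpos.le]; norm_num

lemma hasDerivAt_of_classF {f : ℝ → ℝ} (hf : ContDiffOn ℝ 2 f (Ioi 0)) :
    ∀ r ∈ Ioi (0:ℝ), HasDerivAt f (deriv f r) r := by
  intro r hr
  exact ((hf.differentiableOn (by norm_num)).differentiableAt
    (isOpen_Ioi.mem_nhds hr)).hasDerivAt

lemma contDiffOn_deriv {f : ℝ → ℝ} (hf : ContDiffOn ℝ 2 f (Ioi 0)) :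
    ContDiffOn ℝ 1 (deriv f) (Ioi 0) := by
  exact hf.deriv_of_isOpen isOpen_Ioi (m := 1) (by norm_num)

lemma deriv2_hasDerivAt {f : ℝ → ℝ} (hf : ContDiffOn ℝ 2 f (Ioi 0)) :
    ∀ r ∈ Ioi (0:ℝ), HasDerivAt (deriv f) (deriv (deriv f) r) r := by
  intro r hr
  exact (((contDiffOn_deriv hf).differentiableOn (by norm_num)).differentiableAt
    (isOpen_Ioi.mem_nhds hr)).hasDerivAt

lemma continuousOn_iteratedDeriv {f : ℝ → ℝ} (hf : ContDiffOn ℝ 2 f (Ioi 0)) (k : ℕ)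
    (hk : k ≤ 2) : ContinuousOn (iteratedDeriv k f) (Ioi 0) := by
  interval_cases k
  · simpa [iteratedDeriv_zero] using hf.continuousOn
  · rw [iteratedDeriv_one]; exact (contDiffOn_deriv hf).continuousOn
  · rw [iteratedDeriv_succ, iteratedDeriv_one]
    exact ((contDiffOn_deriv hf).deriv_of_isOpen isOpen_Ioi (m := 0) (by norm_num)).continuousOn

lemma decay_one {g : ℝ → ℝ} {s : ℝ} (hg : ContinuousOn g (Ioi 0))
    (hO : g =O[atTop] fun r : ℝ => r ^ (-s)) {b η : ℝ} (hb : 0 < b) (hη : 0 < η)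
    (hηs : η ≤ s) :
    ∃ C : ℝ, 0 < C ∧ ∀ r : ℝ, b ≤ r → |g r| ≤ C * r ^ (-η) := by
  obtain ⟨c, hc, hbig⟩ := hO.exists_pos
  obtain ⟨R₀, hR₀⟩ := eventually_atTop.mp hbig.bound
  set R : ℝ := max 1 (max b R₀) with hR
  have hR1 : (1:ℝ) ≤ R := le_max_left _ _
  have hRb : b ≤ R := le_trans (le_max_left _ _) (le_max_right _ _)
  have hRR₀ : R₀ ≤ R := le_trans (le_max_right _ _) (le_max_right _ _)
  have hRpos : (0:ℝ) < R := lt_of_lt_of_le one_pos hR1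
  have hcomp : IsCompact (Icc b R) := isCompact_Icc
  have hsub : Icc b R ⊆ Ioi 0 := fun x hx => lt_of_lt_of_le hb hx.1
  obtain ⟨M, hM⟩ := hcomp.exists_bound_of_continuousOn (hg.mono hsub)
  set M' : ℝ := max M 0 with hM'
  refine ⟨c + M' * R ^ η + 1, by positivity, fun r hr => ?_⟩
  have hrpos : (0:ℝ) < r := lt_of_lt_of_le hb hr
  rcases le_or_gt r R with hcase | hcase
  · have h1 : |g r| ≤ M' := le_trans (hM r ⟨hr, hcase⟩) (le_max_left _ _)
    have h2 : R ^ (-η) ≤ r ^ (-η) :=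
      Real.rpow_le_rpow_of_nonpos hrpos hcase (by linarith)
    have h3 : M' = M' * R ^ η * R ^ (-η) := by
      rw [mul_assoc, ← Real.rpow_add hRpos]; simp
    calc |g r| ≤ M' := h1
      _ = M' * R ^ η * R ^ (-η) := h3
      _ ≤ M' * R ^ η * r ^ (-η) := by
          apply mul_le_mul_of_nonneg_left h2; positivity
      _ ≤ (c + M' * R ^ η + 1) * r ^ (-η) := by
          apply mul_le_mul_of_nonneg_right _ (by positivity)
          nlinarith [Real.rpow_nonneg hRpos.le η, le_max_right M 0]
  · have hr1 : (1:ℝ) ≤ r := le_trans hR1 hcase.le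
    have h1 := hR₀ r (le_trans hRR₀ hcase.le)
    have h2 : ‖(r:ℝ) ^ (-s)‖ = r ^ (-s) := by
      rw [Real.norm_eq_abs, abs_of_nonneg (Real.rpow_nonneg hrpos.le _)]
    rw [Real.norm_eq_abs, h2] at h1
    have h3 : r ^ (-s) ≤ r ^ (-η) :=
      Real.rpow_le_rpow_of_exponent_le hr1 (by linarith)
    calc |g r| ≤ c * r ^ (-s) := h1
      _ ≤ c * r ^ (-η) := mul_le_mul_of_nonneg_left h3 hc.le
      _ ≤ (c + M' * R ^ η + 1) * r ^ (-η) := by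
          apply mul_le_mul_of_nonneg_right _ (by positivity)
          nlinarith [Real.rpow_nonneg hRpos.le η, le_max_right M 0]

lemma classF_decay {f : ℝ → ℝ} (hf : ClassF f) {b : ℝ} (hb : 0 < b) :
    ∃ η C : ℝ, 1 < η ∧ 0 < C ∧ ∀ k : ℕ, k ≤ 2 → ∀ r : ℝ, b ≤ r →
      |iteratedDeriv k f r| ≤ C * r ^ (-(η + k)) := by
  obtain ⟨hreg, hO⟩ := hf
  obtain ⟨η₀, hη₀, hO₀⟩ := hO 0 (by norm_num)
  obtain ⟨η₁, hη₁, hO₁⟩ := hO 1 (by norm_num)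
  obtain ⟨η₂, hη₂, hO₂⟩ := hO 2 (by norm_num)
  set η : ℝ := min η₀ (min η₁ η₂) with hη
  have hη1 : 1 < η := lt_min hη₀ (lt_min hη₁ hη₂)
  have hmin0 : η ≤ η₀ := min_le_left _ _
  have hmin1 : η ≤ η₁ := le_trans (min_le_right _ _) (min_le_left _ _)
  have hmin2 : η ≤ η₂ := le_trans (min_le_right _ _) (min_le_right _ _)
  obtain ⟨C₀, hC₀, hb₀⟩ := decay_one (continuousOn_iteratedDeriv hreg 0 (by norm_num))
    hO₀ hb (by push_cast; linarith : (0:ℝ) < η + (0:ℕ)) (by push_cast; linarith)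
  obtain ⟨C₁, hC₁, hb₁⟩ := decay_one (continuousOn_iteratedDeriv hreg 1 (by norm_num))
    hO₁ hb (by push_cast; linarith : (0:ℝ) < η + (1:ℕ)) (by push_cast; linarith)
  obtain ⟨C₂, hC₂, hb₂⟩ := decay_one (continuousOn_iteratedDeriv hreg 2 (by norm_num))
    hO₂ hb (by push_cast; linarith : (0:ℝ) < η + (2:ℕ)) (by push_cast; linarith)
  refine ⟨η, C₀ + C₁ + C₂, hη1, by positivity, fun k hk r hr => ?_⟩
  have hrpos : (0:ℝ) < r := lt_of_lt_of_le hb hr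
  interval_cases k
  · have hrpow : (0:ℝ) ≤ r ^ (-(η + ((0:ℕ):ℝ))) := Real.rpow_nonneg hrpos.le _
    exact le_trans (hb₀ r hr) (by nlinarith)
  · have hrpow : (0:ℝ) ≤ r ^ (-(η + ((1:ℕ):ℝ))) := Real.rpow_nonneg hrpos.le _
    exact le_trans (hb₁ r hr) (by nlinarith)
  · have hrpow : (0:ℝ) ≤ r ^ (-(η + ((2:ℕ):ℝ))) := Real.rpow_nonneg hrpos.le _
    exact le_trans (hb₂ r hr) (by nlinarith)

lemma rpow_mul_helper {q : ℝ} (hq : 0 < q) (η : ℝ) (j : ℕ) :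
    q ^ (j:ℕ) * q ^ (-(η + j)) = q ^ (-η) := by
  rw [← Real.rpow_natCast q j, ← Real.rpow_add hq]
  ring_nf

lemma step_bound {d mult C q η K : ℝ} (j : ℕ) (hq : 0 < q)
    (hd : |d| ≤ C * q ^ (-(η + j))) (hmult : |mult| ≤ K * q ^ (j:ℕ))
    (hC : 0 ≤ C) (hK : 0 ≤ K) :
    |d * mult| ≤ C * K * q ^ (-η) := by
  have h2 : |d| * |mult| ≤ (C * q ^ (-(η+j))) * (K * q ^ (j:ℕ)) :=
    mul_le_mul hd hmult (abs_nonneg _) (by positivity)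
  rw [abs_mul]
  refine h2.trans (le_of_eq ?_)
  rw [show (C * q ^ (-(η+(j:ℝ)))) * (K * q ^ (j:ℕ))
      = C*K*(q^(j:ℕ) * q^(-(η+(j:ℝ)))) by ring, rpow_mul_helper hq]

lemma key_bound {C c η q N : ℝ} (hC : 0 ≤ C) (hc : 0 < c) (hN : 1 ≤ N) (hq : c * N ≤ q)
    (hη : 0 < η) : C * q ^ (-η) ≤ C * c ^ (-η) * N ^ (-η) := by
  have h := Real.rpow_le_rpow_of_nonpos (by positivity : (0:ℝ) < c*N) hq
    (neg_nonpos.mpr hη.le)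
  rw [Real.mul_rpow hc.le (by linarith)] at h
  calc C * q^(-η) ≤ C * (c^(-η) * N^(-η)) := mul_le_mul_of_nonneg_left h hC
    _ = _ := by ring

lemma two_mul_abs_le (a b : ℝ) : |2*a*b| ≤ a^2 + b^2 := by
  have h1 : |2*a*b| = 2 * |a| * |b| := by
    rw [abs_mul, abs_mul]; norm_num
  nlinarith [sq_nonneg (|a| - |b|), sq_abs a, sq_abs b, abs_nonneg a, abs_nonneg b]

lemma final_bound {C η A q N d mult K : ℝ} (j : ℕ) (hC : 0 < C) (hη : 1 < η) (hA : 0 < A)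
    (hN : 1 ≤ N) (hq : A/8 * N ≤ q)
    (hd : |d| ≤ C * q ^ (-(η + j))) (hmult : |mult| ≤ K * q ^ (j:ℕ)) (hK : 0 ≤ K) :
    |d * mult| ≤ C * K * (A/8) ^ (-η) * N ^ (-η) := by
  have hqpos : 0 < q := lt_of_lt_of_le (by positivity) hq
  have h1 := step_bound j hqpos hd hmult hC.le hK
  have h2 := key_bound (mul_nonneg hC.le hK) (by positivity : (0:ℝ) < A/8) hN hq
    (by linarith : (0:ℝ) < η)
  exact le_trans h1 h2

def G1 (f : ℝ → ℝ) (A : ℝ) (p : I2) (x : ℝ) : ℝ :=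
  deriv f (Qf x 1 A p.1) * (A * (2 * ((p.1.1:ℝ) + x * (p.1.2:ℝ)) * (p.1.2:ℝ)))

def G2 (f : ℝ → ℝ) (A : ℝ) (p : I2) (x : ℝ) : ℝ :=
  deriv (deriv f) (Qf x 1 A p.1) * (A * (2 * ((p.1.1:ℝ) + x * (p.1.2:ℝ)) * (p.1.2:ℝ)))^2
    + deriv f (Qf x 1 A p.1) * (A * (2 * (p.1.2:ℝ)^2))

lemma partX (f : ℝ → ℝ) (hf : ClassF f) (A : ℝ) (hA : 0 < A) :
    deriv (fun x' => deriv (fun t => Ef f t 1 A) x') 0 =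
      2 * A * (∑' p : I2,
        (p.1.2 : ℝ) ^ 2 * deriv f (A * ((p.1.1 : ℝ) ^ 2 + (p.1.2 : ℝ) ^ 2))) +
      4 * A ^ 2 * (∑' p : I2,
        (p.1.1 : ℝ) ^ 2 * (p.1.2 : ℝ) ^ 2 *
          deriv (deriv f) (A * ((p.1.1 : ℝ) ^ 2 + (p.1.2 : ℝ) ^ 2))) := by
  have hreg := hf.1
  obtain ⟨η, C, hη, hC, hdec⟩ := classF_decay hf (show (0:ℝ) < A/8 by positivity)
  have hiter2 : iteratedDeriv 2 f = deriv (deriv f) := by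
    rw [iteratedDeriv_succ, iteratedDeriv_one]
  have hongoing : (0:ℝ) < η := by linarith
  set s : Set ℝ := Ioo (-(1:ℝ)/2) (1/2) with hs
  have hsopen : IsOpen s := isOpen_Ioo
  have hsconn : IsPreconnected s := isPreconnected_Ioo
  have h0s : (0:ℝ) ∈ s := by constructor <;> norm_num
  -- basic facts
  have hq_eq : ∀ (p : I2) (x : ℝ), Qf x 1 A p.1
      = A * (((p.1.1:ℝ) + x * (p.1.2:ℝ))^2 + (p.1.2:ℝ)^2) := by
    intro p x; rw [Qf]; ring
  have hq_lb : ∀ (p : I2), ∀ x ∈ s, A/8 * Nsq p ≤ Qf x 1 A p.1 := by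
    intro p x hx
    rw [hq_eq]
    rcases hx with ⟨hx1, hx2⟩
    have hx3 : x^2 ≤ 1/4 := by nlinarith
    have hcore : (Nsq p)/8 ≤ (((p.1.1:ℝ) + x * (p.1.2:ℝ))^2 + (p.1.2:ℝ)^2) := by
      simp only [Nsq]
      nlinarith [sq_nonneg ((p.1.1:ℝ)/2 + x*(p.1.2:ℝ)), sq_nonneg (p.1.2:ℝ),
        sq_nonneg (p.1.1:ℝ), mul_nonneg (by linarith : (0:ℝ) ≤ 1/4 - x^2) (sq_nonneg (p.1.2:ℝ))]
    calc A/8 * Nsq p = A * (Nsq p / 8) := by ring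
      _ ≤ A * _ := mul_le_mul_of_nonneg_left hcore hA.le
  have hq_pos : ∀ (p : I2), ∀ x ∈ s, 0 < Qf x 1 A p.1 := by
    intro p x hx
    have := hq_lb p x hx
    nlinarith [one_le_N p]
  have hq_b : ∀ (p : I2), ∀ x ∈ s, A/8 ≤ Qf x 1 A p.1 := by
    intro p x hx
    have := hq_lb p x hx
    nlinarith [one_le_N p]
  -- derivative of the inner quadratic form
  have hinner : ∀ (p : I2) (x : ℝ), HasDerivAt (fun t => Qf t 1 A p.1)
      (A * (2 * ((p.1.1:ℝ) + x * (p.1.2:ℝ)) * (p.1.2:ℝ))) x := by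
    intro p x
    have h0 : HasDerivAt (fun t : ℝ => (p.1.1:ℝ) + t * (p.1.2:ℝ)) ((p.1.2:ℝ)) x := by
      simpa using ((hasDerivAt_id x).mul_const ((p.1.2:ℝ))).const_add ((p.1.1:ℝ))
    have h2 := (((h0.pow 2).div_const (1:ℝ)).add_const ((1:ℝ) * (p.1.2:ℝ)^2)).const_mul A
    refine h2.congr_deriv ?_
    push_cast
    ring
  -- first derivative termwise
  have hcomp1 : ∀ (p : I2), ∀ x ∈ s, HasDerivAt (fun t => f (Qf t 1 A p.1)) (G1 f A p x) x := by
    intro p x hx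
    exact (hasDerivAt_of_classF hreg _ (hq_pos p x hx)).comp x (hinner p x)
  -- second derivative termwise
  have hcomp2 : ∀ (p : I2), ∀ x ∈ s, HasDerivAt (G1 f A p) (G2 f A p x) x := by
    intro p x hx
    have hfirst : HasDerivAt (fun t => deriv f (Qf t 1 A p.1))
        (deriv (deriv f) (Qf x 1 A p.1) * (A * (2 * ((p.1.1:ℝ) + x * (p.1.2:ℝ)) * (p.1.2:ℝ)))) x :=
      by exact (deriv2_hasDerivAt hreg _ (hq_pos p x hx)).comp x (hinner p x)
    have hsecond : HasDerivAt (fun t : ℝ => A * (2 * ((p.1.1:ℝ) + t * (p.1.2:ℝ)) * (p.1.2:ℝ)))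
        (A * (2 * (p.1.2:ℝ)^2)) x := by
      have h0 : HasDerivAt (fun t : ℝ => (p.1.1:ℝ) + t * (p.1.2:ℝ)) ((p.1.2:ℝ)) x := by
        simpa using ((hasDerivAt_id x).mul_const ((p.1.2:ℝ))).const_add ((p.1.1:ℝ))
      have := ((h0.const_mul (2:ℝ)).mul_const ((p.1.2:ℝ))).const_mul A
      refine this.congr_deriv ?_
      ring
    have := hfirst.mul hsecond
    refine this.congr_deriv ?_
    simp only [G2]
    ring
  -- the summable majorant
  have husum : Summable (fun p : I2 => 3*C*(A/8)^(-η) * Nsq p ^ (-η)) :=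
    (summable_N_rpow hη).mul_left _
  -- bounds
  have hboundG1 : ∀ (p : I2), ∀ x ∈ s, ‖G1 f A p x‖ ≤ 3*C*(A/8)^(-η) * Nsq p ^ (-η) := by
    intro p x hx
    have hq := hq_pos p x hx
    have hd : |deriv f (Qf x 1 A p.1)| ≤ C * (Qf x 1 A p.1) ^ (-(η + (1:ℕ))) := by
      have h := hdec 1 (by norm_num) _ (hq_b p x hx)
      rwa [iteratedDeriv_one] at h
    have hmult : |A * (2 * ((p.1.1:ℝ) + x * (p.1.2:ℝ)) * (p.1.2:ℝ))|
        ≤ 1 * (Qf x 1 A p.1) ^ (1:ℕ) := by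
      rw [one_mul, pow_one, hq_eq, abs_mul, abs_of_nonneg hA.le]
      exact mul_le_mul_of_nonneg_left (two_mul_abs_le _ _) hA.le
    have h := final_bound 1 hC hη hA (one_le_N p) (hq_lb p x hx) hd hmult zero_le_one
    rw [Real.norm_eq_abs]
    refine le_trans h ?_
    have h1 : (0:ℝ) ≤ (A/8)^(-η) * Nsq p ^ (-η) :=
      mul_nonneg (Real.rpow_nonneg (by linarith) _)
        (Real.rpow_nonneg (le_trans zero_le_one (one_le_N p)) _)
    nlinarith
  have hboundG2 : ∀ (p : I2), ∀ x ∈ s, ‖G2 f A p x‖ ≤ 3*C*(A/8)^(-η) * Nsq p ^ (-η) := by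
    intro p x hx
    have hq := hq_pos p x hx
    have hd2 : |deriv (deriv f) (Qf x 1 A p.1)| ≤ C * (Qf x 1 A p.1) ^ (-(η + (2:ℕ))) := by
      have h := hdec 2 (by norm_num) _ (hq_b p x hx)
      rwa [hiter2] at h
    have hd1 : |deriv f (Qf x 1 A p.1)| ≤ C * (Qf x 1 A p.1) ^ (-(η + (1:ℕ))) := by
      have h := hdec 1 (by norm_num) _ (hq_b p x hx)
      rwa [iteratedDeriv_one] at h
    have habs : |A * (2 * ((p.1.1:ℝ) + x * (p.1.2:ℝ)) * (p.1.2:ℝ))| ≤ Qf x 1 A p.1 := by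
      rw [hq_eq, abs_mul, abs_of_nonneg hA.le]
      exact mul_le_mul_of_nonneg_left (two_mul_abs_le _ _) hA.le
    have hmult2 : |(A * (2 * ((p.1.1:ℝ) + x * (p.1.2:ℝ)) * (p.1.2:ℝ)))^2|
        ≤ 1 * (Qf x 1 A p.1) ^ (2:ℕ) := by
      rw [one_mul, abs_pow]
      exact pow_le_pow_left₀ (abs_nonneg _) habs 2
    have hmult1 : |A * (2 * (p.1.2:ℝ)^2)| ≤ 2 * (Qf x 1 A p.1) ^ (1:ℕ) := by
      rw [pow_one, abs_mul, abs_of_nonneg hA.le,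
        abs_of_nonneg (by positivity : (0:ℝ) ≤ 2 * (p.1.2:ℝ)^2), hq_eq]
      nlinarith [mul_nonneg hA.le (sq_nonneg ((p.1.1:ℝ) + x * (p.1.2:ℝ)))]
    have hb1 := final_bound 2 hC hη hA (one_le_N p) (hq_lb p x hx) hd2 hmult2 zero_le_one
    have hb2 := final_bound 1 hC hη hA (one_le_N p) (hq_lb p x hx) hd1 hmult1 (by norm_num)
    rw [Real.norm_eq_abs]
    simp only [G2]
    calc |deriv (deriv f) (Qf x 1 A p.1) * (A * (2 * ((p.1.1:ℝ) + x * (p.1.2:ℝ)) * (p.1.2:ℝ)))^2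
        + deriv f (Qf x 1 A p.1) * (A * (2 * (p.1.2:ℝ)^2))|
        ≤ |deriv (deriv f) (Qf x 1 A p.1) * (A * (2 * ((p.1.1:ℝ) + x * (p.1.2:ℝ)) * (p.1.2:ℝ)))^2|
          + |deriv f (Qf x 1 A p.1) * (A * (2 * (p.1.2:ℝ)^2))| := abs_add_le _ _
      _ ≤ C * 1 * (A/8)^(-η) * Nsq p ^ (-η) + C * 2 * (A/8)^(-η) * Nsq p ^ (-η) := by
          exact add_le_add hb1 hb2
      _ = 3*C*(A/8)^(-η) * Nsq p ^ (-η) := by ring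
  -- the value at (0,1)
  have hq0 : ∀ p : I2, Qf 0 1 A p.1 = A * Nsq p := by
    intro p; simp only [Qf, Nsq]; ring
  have hq0b : ∀ p : I2, A/8 * Nsq p ≤ A * Nsq p := by
    intro p; nlinarith [one_le_N p]
  have hq0b' : ∀ p : I2, A/8 ≤ A * Nsq p := by
    intro p; nlinarith [one_le_N p]
  have hsumEf0 : Summable (fun p : I2 => f (Qf 0 1 A p.1)) := by
    apply Summable.of_norm_bounded ((summable_N_rpow hη).mul_left (C*(A/8)^(-η)))
    intro p
    rw [Real.norm_eq_abs, hq0]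
    have hd := hdec 0 (by norm_num) (A * Nsq p) (hq0b' p)
    rw [iteratedDeriv_zero] at hd
    have he : -(η + ((0:ℕ):ℝ)) = -η := by norm_num
    rw [he] at hd
    refine le_trans hd (le_trans (key_bound hC.le (by positivity) (one_le_N p) (hq0b p)
      hongoing) (le_of_eq ?_))
    ring
  -- first application
  have happ1 : ∀ x ∈ s, HasDerivAt (fun z => ∑' p : I2, f (Qf z 1 A p.1))
      (∑' p : I2, G1 f A p x) x := by
    intro x hx
    exact hasDerivAt_tsum_of_isPreconnected husum hsopen hsconn hcomp1 hboundG1 h0s hsumEf0 hx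
  have hsumG10 : Summable (fun p : I2 => G1 f A p 0) :=
    Summable.of_norm_bounded husum (fun p => hboundG1 p 0 h0s)
  have happ2 : HasDerivAt (fun z : ℝ => ∑' p : I2, G1 f A p z) (∑' p : I2, G2 f A p 0) 0 :=
    hasDerivAt_tsum_of_isPreconnected husum hsopen hsconn hcomp2 hboundG2 h0s hsumG10 h0s
  -- identify derivatives
  have heq : (fun x' => deriv (fun t => Ef f t 1 A) x') =ᶠ[nhds 0]
      (fun z : ℝ => ∑' p : I2, G1 f A p z) := by
    filter_upwards [hsopen.mem_nhds h0s] with x hx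
    exact (happ1 x hx).deriv
  rw [heq.deriv_eq, happ2.deriv]
  -- final algebra
  have hterm : ∀ p : I2, G2 f A p 0 =
      2*A*((p.1.2:ℝ)^2 * deriv f (A * ((p.1.1:ℝ)^2 + (p.1.2:ℝ)^2)))
      + 4*A^2*((p.1.1:ℝ)^2 * (p.1.2:ℝ)^2 * deriv (deriv f) (A * ((p.1.1:ℝ)^2 + (p.1.2:ℝ)^2))) := by
    intro p
    have h0 : Qf 0 1 A p.1 = A * ((p.1.1:ℝ)^2 + (p.1.2:ℝ)^2) := by rw [Qf]; ring
    simp only [G2, h0]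
    ring
  rw [tsum_congr hterm]
  -- summabilities for the split
  have hs1 : Summable (fun p : I2 =>
      (p.1.2:ℝ)^2 * deriv f (A * ((p.1.1:ℝ)^2 + (p.1.2:ℝ)^2))) := by
    apply Summable.of_norm_bounded ((summable_N_rpow hη).mul_left (C * (1/A) * (A/8)^(-η)))
    intro p
    have h0 : A * ((p.1.1:ℝ)^2 + (p.1.2:ℝ)^2) = A * Nsq p := by rw [Nsq]
    rw [Real.norm_eq_abs, h0, mul_comm]
    have hd : |deriv f (A * Nsq p)| ≤ C * (A * Nsq p) ^ (-(η + (1:ℕ))) := by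
      have h := hdec 1 (by norm_num) _ (hq0b' p)
      rwa [iteratedDeriv_one] at h
    have hmult : |(p.1.2:ℝ)^2| ≤ (1/A) * (A * Nsq p) ^ (1:ℕ) := by
      rw [pow_one, abs_of_nonneg (sq_nonneg _)]
      have : (p.1.2:ℝ)^2 ≤ Nsq p := by simp only [Nsq]; nlinarith [sq_nonneg (p.1.1:ℝ)]
      calc (p.1.2:ℝ)^2 ≤ Nsq p := this
        _ = (1/A) * (A * Nsq p) := by field_simp
    exact final_bound 1 hC hη hA (one_le_N p) (hq0b p) hd hmult (by positivity)
  have hs2 : Summable (fun p : I2 =>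
      (p.1.1:ℝ)^2 * (p.1.2:ℝ)^2 * deriv (deriv f) (A * ((p.1.1:ℝ)^2 + (p.1.2:ℝ)^2))) := by
    apply Summable.of_norm_bounded
      ((summable_N_rpow hη).mul_left (C * (1/A^2) * (A/8)^(-η)))
    intro p
    have h0 : A * ((p.1.1:ℝ)^2 + (p.1.2:ℝ)^2) = A * Nsq p := by rw [Nsq]
    rw [Real.norm_eq_abs, h0, mul_comm]
    have hd : |deriv (deriv f) (A * Nsq p)| ≤ C * (A * Nsq p) ^ (-(η + (2:ℕ))) := by
      have h := hdec 2 (by norm_num) _ (hq0b' p)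
      rwa [hiter2] at h
    have hmult : |(p.1.1:ℝ)^2 * (p.1.2:ℝ)^2| ≤ (1/A^2) * (A * Nsq p) ^ (2:ℕ) := by
      rw [abs_of_nonneg (by positivity)]
      have h1 : (p.1.1:ℝ)^2 * (p.1.2:ℝ)^2 ≤ (Nsq p)^2 := by
        simp only [Nsq]; nlinarith [sq_nonneg (p.1.1:ℝ), sq_nonneg (p.1.2:ℝ)]
      calc (p.1.1:ℝ)^2 * (p.1.2:ℝ)^2 ≤ (Nsq p)^2 := h1
        _ = (1/A^2) * (A * Nsq p)^(2:ℕ) := by field_simp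
    exact final_bound 2 hC hη hA (one_le_N p) (hq0b p) hd hmult (by positivity)
  rw [Summable.tsum_add (hs1.mul_left (2*A)) (hs2.mul_left (4*A^2)), tsum_mul_left, tsum_mul_left]

def H1 (f : ℝ → ℝ) (A : ℝ) (p : I2) (y : ℝ) : ℝ :=
  deriv f (Qf 0 y A p.1) * (A * ((p.1.2:ℝ)^2 - (p.1.1:ℝ)^2 / y^2))

def H2 (f : ℝ → ℝ) (A : ℝ) (p : I2) (y : ℝ) : ℝ :=
  deriv (deriv f) (Qf 0 y A p.1) * (A * ((p.1.2:ℝ)^2 - (p.1.1:ℝ)^2 / y^2))^2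
    + deriv f (Qf 0 y A p.1) * (A * (2 * (p.1.1:ℝ)^2 / y^3))

set_option maxHeartbeats 1000000 in
lemma partY (f : ℝ → ℝ) (hf : ClassF f) (A : ℝ) (hA : 0 < A) :
    deriv (fun y' => deriv (fun t => Ef f 0 t A) y') 1 =
      2 * A * (∑' p : I2,
        (p.1.1 : ℝ) ^ 2 * deriv f (A * ((p.1.1 : ℝ) ^ 2 + (p.1.2 : ℝ) ^ 2))) +
      A ^ 2 * (∑' p : I2,
        ((p.1.2 : ℝ) ^ 2 - (p.1.1 : ℝ) ^ 2) ^ 2 *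
          deriv (deriv f) (A * ((p.1.1 : ℝ) ^ 2 + (p.1.2 : ℝ) ^ 2))) := by
  have hreg := hf.1
  obtain ⟨η, C, hη, hC, hdec⟩ := classF_decay hf (show (0:ℝ) < A/8 by positivity)
  have hiter2 : iteratedDeriv 2 f = deriv (deriv f) := by
    rw [iteratedDeriv_succ, iteratedDeriv_one]
  have hηpos : (0:ℝ) < η := by linarith
  set s : Set ℝ := Ioo (1/2 : ℝ) 2 with hs
  have hsopen : IsOpen s := isOpen_Ioo
  have hsconn : IsPreconnected s := isPreconnected_Ioo
  have h1s : (1:ℝ) ∈ s := by constructor <;> norm_num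
  have hq_eq : ∀ (p : I2) (y : ℝ), Qf 0 y A p.1
      = A * ((p.1.1:ℝ)^2 / y + y * (p.1.2:ℝ)^2) := by
    intro p y; rw [Qf]; ring
  have hq_half : ∀ (p : I2), ∀ y ∈ s, A/2 * Nsq p ≤ Qf 0 y A p.1 := by
    intro p y hy
    rcases hy with ⟨hy1, hy2⟩
    have hy0 : (0:ℝ) < y := by linarith
    rw [hq_eq]
    have h1 : (p.1.1:ℝ)^2/2 ≤ (p.1.1:ℝ)^2/y := by
      rw [div_le_div_iff₀ (by norm_num) hy0]
      nlinarith [sq_nonneg (p.1.1:ℝ)]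
    have h2 : (p.1.2:ℝ)^2/2 ≤ y * (p.1.2:ℝ)^2 := by
      nlinarith [sq_nonneg (p.1.2:ℝ)]
    have hcore : Nsq p / 2 ≤ (p.1.1:ℝ)^2 / y + y * (p.1.2:ℝ)^2 := by
      simp only [Nsq]; linarith
    calc A/2 * Nsq p = A * (Nsq p / 2) := by ring
      _ ≤ A * _ := mul_le_mul_of_nonneg_left hcore hA.le
  have hq_lb : ∀ (p : I2), ∀ y ∈ s, A/8 * Nsq p ≤ Qf 0 y A p.1 := by
    intro p y hy
    refine le_trans ?_ (hq_half p y hy)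
    nlinarith [one_le_N p, hA.le]
  have hq_pos : ∀ (p : I2), ∀ y ∈ s, 0 < Qf 0 y A p.1 := by
    intro p y hy
    have := hq_lb p y hy
    nlinarith [one_le_N p]
  have hq_b : ∀ (p : I2), ∀ y ∈ s, A/8 ≤ Qf 0 y A p.1 := by
    intro p y hy
    have := hq_lb p y hy
    nlinarith [one_le_N p]
  -- derivative of the inner quadratic form in y
  have hinner : ∀ (p : I2), ∀ y ∈ s, HasDerivAt (fun t => Qf 0 t A p.1)
      (A * ((p.1.2:ℝ)^2 - (p.1.1:ℝ)^2 / y^2)) y := by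
    intro p y hy
    have hy0 : (0:ℝ) < y := by rcases hy with ⟨h,_⟩; linarith
    have hdiv : HasDerivAt (fun t : ℝ => ((p.1.1:ℝ) + 0 * (p.1.2:ℝ))^2 / t)
        ((0 * y - ((p.1.1:ℝ) + 0 * (p.1.2:ℝ))^2 * 1) / y^2) y :=
      (hasDerivAt_const y (((p.1.1:ℝ) + 0 * (p.1.2:ℝ))^2)).div (hasDerivAt_id y) hy0.ne'
    have hlin : HasDerivAt (fun t : ℝ => t * (p.1.2:ℝ)^2) ((p.1.2:ℝ)^2) y := by
      simpa using (hasDerivAt_id y).mul_const ((p.1.2:ℝ)^2)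
    have h := ((hdiv.add hlin).const_mul A)
    have he : (0 * y - ((p.1.1:ℝ) + 0 * (p.1.2:ℝ))^2 * 1) / y^2 + (p.1.2:ℝ)^2
        = (p.1.2:ℝ)^2 - (p.1.1:ℝ)^2 / y^2 := by
      field_simp
      ring
    rw [he] at h
    exact h
  -- first derivative termwise
  have hcomp1 : ∀ (p : I2), ∀ y ∈ s, HasDerivAt (fun t => f (Qf 0 t A p.1)) (H1 f A p y) y := by
    intro p y hy
    exact (hasDerivAt_of_classF hreg _ (hq_pos p y hy)).comp y (hinner p y hy)
  -- second derivative termwise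
  have hsecond : ∀ (p : I2), ∀ y ∈ s,
      HasDerivAt (fun t : ℝ => A * ((p.1.2:ℝ)^2 - (p.1.1:ℝ)^2 / t^2))
        (A * (2 * (p.1.1:ℝ)^2 / y^3)) y := by
    intro p y hy
    have hy0 : (0:ℝ) < y := by rcases hy with ⟨h,_⟩; linarith
    have hpow : HasDerivAt (fun t : ℝ => t^2) (2 * y^(2-1)) y := by
      simpa using hasDerivAt_pow 2 y
    have hdiv2 : HasDerivAt (fun t : ℝ => (p.1.1:ℝ)^2 / t^2)
        ((0 * y^2 - (p.1.1:ℝ)^2 * (2 * y^(2-1))) / (y^2)^2) y :=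
      (hasDerivAt_const y ((p.1.1:ℝ)^2)).div hpow (pow_ne_zero 2 hy0.ne')
    have h := (((hasDerivAt_const y ((p.1.2:ℝ)^2)).sub hdiv2).const_mul A)
    refine h.congr_deriv ?_
    field_simp
    ring
  have hcomp2 : ∀ (p : I2), ∀ y ∈ s, HasDerivAt (H1 f A p) (H2 f A p y) y := by
    intro p y hy
    have hfirst : HasDerivAt (fun t => deriv f (Qf 0 t A p.1))
        (deriv (deriv f) (Qf 0 y A p.1) * (A * ((p.1.2:ℝ)^2 - (p.1.1:ℝ)^2 / y^2))) y :=
      by exact (deriv2_hasDerivAt hreg _ (hq_pos p y hy)).comp y (hinner p y hy)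
    have h := hfirst.mul (hsecond p y hy)
    refine h.congr_deriv ?_
    simp only [H2]
    ring
  -- majorant
  have husum : Summable (fun p : I2 => 96*C*(A/8)^(-η) * Nsq p ^ (-η)) :=
    (summable_N_rpow hη).mul_left _
  -- bound on the multiplier
  have habs1 : ∀ (p : I2), ∀ y ∈ s,
      |A * ((p.1.2:ℝ)^2 - (p.1.1:ℝ)^2 / y^2)| ≤ 8 * (Qf 0 y A p.1) := by
    intro p y hy
    have hq := hq_half p y hy
    rcases hy with ⟨hy1, hy2⟩
    have hy0 : (0:ℝ) < y := by linarith
    have hm : (p.1.1:ℝ)^2 / y^2 ≤ 4 * (p.1.1:ℝ)^2 := by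
      rw [div_le_iff₀ (by positivity)]
      nlinarith [mul_nonneg (mul_nonneg (sq_nonneg (p.1.1:ℝ))
        (by linarith : (0:ℝ) ≤ 2*y - 1)) (by linarith : (0:ℝ) ≤ 2*y + 1)]
    have habs : |(p.1.2:ℝ)^2 - (p.1.1:ℝ)^2 / y^2| ≤ 4 * Nsq p := by
      rw [abs_le]
      constructor
      · simp only [Nsq]
        have : (0:ℝ) ≤ (p.1.1:ℝ)^2 / y^2 := by positivity
        nlinarith [sq_nonneg (p.1.2:ℝ), sq_nonneg (p.1.1:ℝ)]
      · simp only [Nsq]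
        have : (0:ℝ) ≤ (p.1.1:ℝ)^2 / y^2 := by positivity
        nlinarith [sq_nonneg (p.1.2:ℝ), sq_nonneg (p.1.1:ℝ)]
    rw [abs_mul, abs_of_nonneg hA.le]
    calc A * |(p.1.2:ℝ)^2 - (p.1.1:ℝ)^2 / y^2| ≤ A * (4 * Nsq p) :=
          mul_le_mul_of_nonneg_left habs hA.le
      _ = 8 * (A/2 * Nsq p) := by ring
      _ ≤ 8 * (Qf 0 y A p.1) := by linarith
  have hboundH1 : ∀ (p : I2), ∀ y ∈ s, ‖H1 f A p y‖ ≤ 96*C*(A/8)^(-η) * Nsq p ^ (-η) := by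
    intro p y hy
    have hq := hq_pos p y hy
    have hd : |deriv f (Qf 0 y A p.1)| ≤ C * (Qf 0 y A p.1) ^ (-(η + (1:ℕ))) := by
      have h := hdec 1 (by norm_num) _ (hq_b p y hy)
      rwa [iteratedDeriv_one] at h
    have hmult : |A * ((p.1.2:ℝ)^2 - (p.1.1:ℝ)^2 / y^2)| ≤ 8 * (Qf 0 y A p.1) ^ (1:ℕ) := by
      rw [pow_one]; exact habs1 p y hy
    have h := final_bound 1 hC hη hA (one_le_N p) (hq_lb p y hy) hd hmult (by norm_num)
    rw [Real.norm_eq_abs]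
    refine le_trans h ?_
    have h1 : (0:ℝ) ≤ (A/8)^(-η) * Nsq p ^ (-η) :=
      mul_nonneg (Real.rpow_nonneg (by linarith) _)
        (Real.rpow_nonneg (le_trans zero_le_one (one_le_N p)) _)
    nlinarith
  have hboundH2 : ∀ (p : I2), ∀ y ∈ s, ‖H2 f A p y‖ ≤ 96*C*(A/8)^(-η) * Nsq p ^ (-η) := by
    intro p y hy
    have hq := hq_pos p y hy
    rcases hy with ⟨hy1, hy2⟩
    have hy0 : (0:ℝ) < y := by linarith
    have hd2 : |deriv (deriv f) (Qf 0 y A p.1)| ≤ C * (Qf 0 y A p.1) ^ (-(η + (2:ℕ))) := by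
      have h := hdec 2 (by norm_num) _ (hq_b p y ⟨hy1, hy2⟩)
      rwa [hiter2] at h
    have hd1 : |deriv f (Qf 0 y A p.1)| ≤ C * (Qf 0 y A p.1) ^ (-(η + (1:ℕ))) := by
      have h := hdec 1 (by norm_num) _ (hq_b p y ⟨hy1, hy2⟩)
      rwa [iteratedDeriv_one] at h
    have hmult2 : |(A * ((p.1.2:ℝ)^2 - (p.1.1:ℝ)^2 / y^2))^2|
        ≤ 64 * (Qf 0 y A p.1) ^ (2:ℕ) := by
      rw [abs_pow]
      have h := habs1 p y ⟨hy1, hy2⟩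
      calc |A * ((p.1.2:ℝ)^2 - (p.1.1:ℝ)^2 / y^2)|^2 ≤ (8 * (Qf 0 y A p.1))^2 :=
            pow_le_pow_left₀ (abs_nonneg _) h 2
        _ = 64 * (Qf 0 y A p.1) ^ (2:ℕ) := by ring
    have hmult1 : |A * (2 * (p.1.1:ℝ)^2 / y^3)| ≤ 32 * (Qf 0 y A p.1) ^ (1:ℕ) := by
      rw [pow_one, abs_mul, abs_of_nonneg hA.le,
        abs_of_nonneg (by positivity : (0:ℝ) ≤ 2 * (p.1.1:ℝ)^2 / y^3)]
      have hy3 : (1:ℝ)/8 ≤ y^3 := by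
        nlinarith [mul_nonneg (by linarith : (0:ℝ) ≤ y - 1/2) (sq_nonneg y),
          mul_nonneg (by linarith : (0:ℝ) ≤ y - 1/2) (by linarith : (0:ℝ) ≤ y)]
      have hm : 2 * (p.1.1:ℝ)^2 / y^3 ≤ 16 * (p.1.1:ℝ)^2 := by
        rw [div_le_iff₀ (by positivity)]
        nlinarith [mul_nonneg (sq_nonneg (p.1.1:ℝ)) (by linarith : (0:ℝ) ≤ y^3 - 1/8)]
      have hNle : (p.1.1:ℝ)^2 ≤ Nsq p := by
        simp only [Nsq]; nlinarith [sq_nonneg (p.1.2:ℝ)]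
      have hq2 := hq_half p y ⟨hy1, hy2⟩
      calc A * (2 * (p.1.1:ℝ)^2 / y^3) ≤ A * (16 * (p.1.1:ℝ)^2) :=
            mul_le_mul_of_nonneg_left hm hA.le
        _ ≤ A * (16 * Nsq p) := by nlinarith
        _ = 32 * (A/2 * Nsq p) := by ring
        _ ≤ 32 * (Qf 0 y A p.1) := by linarith
    have hb1 := final_bound 2 hC hη hA (one_le_N p) (hq_lb p y ⟨hy1, hy2⟩) hd2 hmult2
      (by norm_num)
    have hb2 := final_bound 1 hC hη hA (one_le_N p) (hq_lb p y ⟨hy1, hy2⟩) hd1 hmult1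
      (by norm_num)
    rw [Real.norm_eq_abs]
    simp only [H2]
    calc |deriv (deriv f) (Qf 0 y A p.1) * (A * ((p.1.2:ℝ)^2 - (p.1.1:ℝ)^2 / y^2))^2
        + deriv f (Qf 0 y A p.1) * (A * (2 * (p.1.1:ℝ)^2 / y^3))|
        ≤ |deriv (deriv f) (Qf 0 y A p.1) * (A * ((p.1.2:ℝ)^2 - (p.1.1:ℝ)^2 / y^2))^2|
          + |deriv f (Qf 0 y A p.1) * (A * (2 * (p.1.1:ℝ)^2 / y^3))| := abs_add_le _ _
      _ ≤ C * 64 * (A/8)^(-η) * Nsq p ^ (-η) + C * 32 * (A/8)^(-η) * Nsq p ^ (-η) :=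
          add_le_add hb1 hb2
      _ = 96*C*(A/8)^(-η) * Nsq p ^ (-η) := by ring
  -- summability at the base point
  have hq0 : ∀ p : I2, Qf 0 1 A p.1 = A * Nsq p := by
    intro p; simp only [Qf, Nsq]; ring
  have hq0b : ∀ p : I2, A/8 * Nsq p ≤ A * Nsq p := by
    intro p; nlinarith [one_le_N p]
  have hq0b' : ∀ p : I2, A/8 ≤ A * Nsq p := by
    intro p; nlinarith [one_le_N p]
  have hsumEf0 : Summable (fun p : I2 => f (Qf 0 1 A p.1)) := by
    apply Summable.of_norm_bounded ((summable_N_rpow hη).mul_left (C*(A/8)^(-η)))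
    intro p
    rw [Real.norm_eq_abs, hq0]
    have hd := hdec 0 (by norm_num) (A * Nsq p) (hq0b' p)
    rw [iteratedDeriv_zero] at hd
    have he : -(η + ((0:ℕ):ℝ)) = -η := by norm_num
    rw [he] at hd
    refine le_trans hd (le_trans (key_bound hC.le (by positivity) (one_le_N p) (hq0b p)
      hηpos) (le_of_eq ?_))
    ring
  -- the two applications
  have happ1 : ∀ y ∈ s, HasDerivAt (fun z => ∑' p : I2, f (Qf 0 z A p.1))
      (∑' p : I2, H1 f A p y) y := by
    intro y hy
    exact hasDerivAt_tsum_of_isPreconnected husum hsopen hsconn hcomp1 hboundH1 h1s hsumEf0 hy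
  have hsumH10 : Summable (fun p : I2 => H1 f A p 1) :=
    Summable.of_norm_bounded husum (fun p => hboundH1 p 1 h1s)
  have happ2 : HasDerivAt (fun z : ℝ => ∑' p : I2, H1 f A p z) (∑' p : I2, H2 f A p 1) 1 :=
    hasDerivAt_tsum_of_isPreconnected husum hsopen hsconn hcomp2 hboundH2 h1s hsumH10 h1s
  have heq : (fun y' => deriv (fun t => Ef f 0 t A) y') =ᶠ[nhds 1]
      (fun z : ℝ => ∑' p : I2, H1 f A p z) := by
    filter_upwards [hsopen.mem_nhds h1s] with y hy
    exact (happ1 y hy).deriv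
  rw [heq.deriv_eq, happ2.deriv]
  -- final algebra
  have hterm : ∀ p : I2, H2 f A p 1 =
      2*A*((p.1.1:ℝ)^2 * deriv f (A * ((p.1.1:ℝ)^2 + (p.1.2:ℝ)^2)))
      + A^2*(((p.1.2:ℝ)^2 - (p.1.1:ℝ)^2)^2
          * deriv (deriv f) (A * ((p.1.1:ℝ)^2 + (p.1.2:ℝ)^2))) := by
    intro p
    have h0 : Qf 0 1 A p.1 = A * ((p.1.1:ℝ)^2 + (p.1.2:ℝ)^2) := by rw [Qf]; ring
    simp only [H2, h0]
    norm_num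
    ring
  rw [tsum_congr hterm]
  have hs1 : Summable (fun p : I2 =>
      (p.1.1:ℝ)^2 * deriv f (A * ((p.1.1:ℝ)^2 + (p.1.2:ℝ)^2))) := by
    apply Summable.of_norm_bounded ((summable_N_rpow hη).mul_left (C * (1/A) * (A/8)^(-η)))
    intro p
    have h0 : A * ((p.1.1:ℝ)^2 + (p.1.2:ℝ)^2) = A * Nsq p := by rw [Nsq]
    rw [Real.norm_eq_abs, h0, mul_comm]
    have hd : |deriv f (A * Nsq p)| ≤ C * (A * Nsq p) ^ (-(η + (1:ℕ))) := by
      have h := hdec 1 (by norm_num) _ (hq0b' p)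
      rwa [iteratedDeriv_one] at h
    have hmult : |(p.1.1:ℝ)^2| ≤ (1/A) * (A * Nsq p) ^ (1:ℕ) := by
      rw [pow_one, abs_of_nonneg (sq_nonneg _)]
      have h1 : (p.1.1:ℝ)^2 ≤ Nsq p := by simp only [Nsq]; nlinarith [sq_nonneg (p.1.2:ℝ)]
      calc (p.1.1:ℝ)^2 ≤ Nsq p := h1
        _ = (1/A) * (A * Nsq p) := by field_simp
    exact final_bound 1 hC hη hA (one_le_N p) (hq0b p) hd hmult (by positivity)
  have hs2 : Summable (fun p : I2 =>
      ((p.1.2:ℝ)^2 - (p.1.1:ℝ)^2)^2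
        * deriv (deriv f) (A * ((p.1.1:ℝ)^2 + (p.1.2:ℝ)^2))) := by
    apply Summable.of_norm_bounded
      ((summable_N_rpow hη).mul_left (C * (1/A^2) * (A/8)^(-η)))
    intro p
    have h0 : A * ((p.1.1:ℝ)^2 + (p.1.2:ℝ)^2) = A * Nsq p := by rw [Nsq]
    rw [Real.norm_eq_abs, h0, mul_comm]
    have hd : |deriv (deriv f) (A * Nsq p)| ≤ C * (A * Nsq p) ^ (-(η + (2:ℕ))) := by
      have h := hdec 2 (by norm_num) _ (hq0b' p)
      rwa [hiter2] at h
    have hmult : |((p.1.2:ℝ)^2 - (p.1.1:ℝ)^2)^2| ≤ (1/A^2) * (A * Nsq p) ^ (2:ℕ) := by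
      rw [abs_of_nonneg (sq_nonneg _)]
      have h1 : ((p.1.2:ℝ)^2 - (p.1.1:ℝ)^2)^2 ≤ (Nsq p)^2 := by
        simp only [Nsq]; nlinarith [sq_nonneg (p.1.1:ℝ), sq_nonneg (p.1.2:ℝ),
          mul_nonneg (sq_nonneg (p.1.1:ℝ)) (sq_nonneg (p.1.2:ℝ))]
      calc ((p.1.2:ℝ)^2 - (p.1.1:ℝ)^2)^2 ≤ (Nsq p)^2 := h1
        _ = (1/A^2) * (A * Nsq p)^(2:ℕ) := by field_simp
    exact final_bound 2 hC hη hA (one_le_N p) (hq0b p) hd hmult (by positivity)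
  rw [Summable.tsum_add (hs1.mul_left (2*A)) (hs2.mul_left (A^2)), tsum_mul_left, tsum_mul_left]

def negFst : I2 ≃ I2 where
  toFun p := ⟨(-p.1.1, p.1.2), fun h => p.2 (by
    rw [Prod.ext_iff] at h ⊢
    simp only [Prod.fst_zero, Prod.snd_zero] at h ⊢
    exact ⟨neg_eq_zero.mp h.1, h.2⟩)⟩
  invFun p := ⟨(-p.1.1, p.1.2), fun h => p.2 (by
    rw [Prod.ext_iff] at h ⊢
    simp only [Prod.fst_zero, Prod.snd_zero] at h ⊢
    exact ⟨neg_eq_zero.mp h.1, h.2⟩)⟩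
  left_inv p := by ext <;> simp
  right_inv p := by ext <;> simp

lemma Ef_even (f : ℝ → ℝ) (A : ℝ) (t y : ℝ) : Ef f t y A = Ef f (-t) y A := by
  unfold Ef
  rw [← (negFst).tsum_eq (fun p : I2 => f (Qf (-t) y A p.1))]
  apply tsum_congr
  intro p
  congr 1
  show Qf t y A p.1 = Qf (-t) y A (negFst p).1
  simp only [negFst, Equiv.coe_fn_mk, Qf]
  push_cast
  ring

lemma partMix (f : ℝ → ℝ) (A : ℝ) :
    deriv (fun y' => deriv (fun t => Ef f t y' A) 0) 1 = 0 := by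
  have hodd : ∀ y : ℝ, deriv (fun t => Ef f t y A) 0 = 0 := by
    intro y
    have h1 : (fun t : ℝ => Ef f t y A) = (fun t : ℝ => Ef f (-t) y A) := by
      funext t; exact Ef_even f A t y
    have h2 : deriv (fun t : ℝ => Ef f (-t) y A) 0 = -deriv (fun t : ℝ => Ef f t y A) (-0) :=
      deriv_comp_neg (fun t : ℝ => Ef f t y A) 0
    rw [neg_zero] at h2
    have h3 : deriv (fun t : ℝ => Ef f t y A) 0 = -deriv (fun t : ℝ => Ef f t y A) 0 := by
      conv_lhs => rw [h1]
      exact h2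
    linarith
  have h4 : (fun y' : ℝ => deriv (fun t => Ef f t y' A) 0) = fun _ => (0:ℝ) :=
    funext hodd
  rw [h4, deriv_const]


end HessianAux

open HessianAux Set

/-- Second derivatives of `(x,y) ↦ E_f(x,y,A)` at the square point `(0,1)`:
explicit formulas for `∂²ₓₓ` and `∂²ᵧᵧ`, and vanishing of the mixed derivative, so that
the Hessian of `E_f(·,·,A)` at `(0,1)` is diagonal. -/
theorem hessian_at_square (f : ℝ → ℝ) (hf : ClassF f) (A : ℝ) (hA : 0 < A) :
    (deriv (fun x' => deriv (fun t => Ef f t 1 A) x') 0 =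
      2 * A * (∑' p : {p : ℤ × ℤ // p ≠ 0},
        (p.1.2 : ℝ) ^ 2 * deriv f (A * ((p.1.1 : ℝ) ^ 2 + (p.1.2 : ℝ) ^ 2))) +
      4 * A ^ 2 * (∑' p : {p : ℤ × ℤ // p ≠ 0},
        (p.1.1 : ℝ) ^ 2 * (p.1.2 : ℝ) ^ 2 *
          deriv (deriv f) (A * ((p.1.1 : ℝ) ^ 2 + (p.1.2 : ℝ) ^ 2)))) ∧
    (deriv (fun y' => deriv (fun t => Ef f 0 t A) y') 1 =
      2 * A * (∑' p : {p : ℤ × ℤ // p ≠ 0},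
        (p.1.1 : ℝ) ^ 2 * deriv f (A * ((p.1.1 : ℝ) ^ 2 + (p.1.2 : ℝ) ^ 2))) +
      A ^ 2 * (∑' p : {p : ℤ × ℤ // p ≠ 0},
        ((p.1.2 : ℝ) ^ 2 - (p.1.1 : ℝ) ^ 2) ^ 2 *
          deriv (deriv f) (A * ((p.1.1 : ℝ) ^ 2 + (p.1.2 : ℝ) ^ 2)))) ∧
    deriv (fun y' => deriv (fun t => Ef f t y' A) 0) 1 = 0 :=
  ⟨HessianAux.partX f hf A hA, HessianAux.partY f hf A hA, HessianAux.partMix f A⟩
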